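/- Any path in the Constrained Graph of agent i from the start (v^i_1, 1) to the goal (v^i_{k_i}, k_i), when projected onto its first coordinate, is a d-delay of the original path π_i for some d ≥ 0 equal to the number of self-loop edges used. -/

import Mathlib

variable {V : Type*}

/-- The path obtained from `π` by repeating its `j`-th vertex an additional `ks[j]` times. -/
def delayPath (π : List V) (ks : List ℕ) : List V :=
  (List.zipWith (fun v k => List.replicate (k + 1) v) π ks).flatten

/-- `π'` is a `d`-delay of `π`. -/
def IsDelay (d : ℕ) (π π' : List V) : Prop :=
  ∃ ks : List ℕ, ks.length = π.length ∧ ks.sum = d ∧ π' = delayPath π ks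

/-- Agent-specific edges of the Constrained Graph of a path `π` (0-indexed):
from `(π[j], j)` (for `j+1 < |π|`) one may advance to `(π[j+1], j+1)` or take
the self-loop back to `(π[j], j)`. -/
def CGEdge [Inhabited V] (π : List V) (a b : V × ℕ) : Prop :=
  ∃ j, j + 1 < π.length ∧ a = (π.getD j default, j) ∧
    (b = (π.getD (j + 1) default, j + 1) ∨ b = a)

/-- Any path in the Constrained Graph of agent `i` from the start `(π[0], 0)` to
the goal `(π[k-1], k-1)`, projected to its first coordinate, is a `d`-delay of the
original path `π`, where `d` is the number of self-loop edges used. -/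
lemma cg_aux [Inhabited V] [DecidableEq V] (π : List V) :
    ∀ ρ : List (V × ℕ), ∀ j, j < π.length →
    ρ.Chain' (CGEdge π) →
    ρ.head? = some (π.getD j default, j) →
    ρ.getLast? = some (π.getD (π.length - 1) default, π.length - 1) →
    IsDelay (((ρ.zip ρ.tail).filter fun p => decide (p.1 = p.2)).length)
      (π.drop j) (ρ.map Prod.fst) := by
  intro ρ
  induction ρ with
  | nil => intro j _ _ hstart _; simp at hstart
  | cons a rest ih =>
    intro j hj hchain hstart hend
    rw [List.head?_cons, Option.some_inj] at hstart
    cases rest with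
    | nil =>
      simp only [List.getLast?_singleton, Option.some_inj] at hend
      subst hstart
      have hj2 : j = π.length - 1 := by
        have := congrArg Prod.snd hend; simpa using this
      subst hj2
      refine ⟨[0], ?_, ?_, ?_⟩
      · simp only [List.length_singleton, List.length_drop]; omega
      · simp
      · have hdrop : π.drop (π.length - 1) = [π.getD (π.length - 1) default] := by
          rw [List.drop_eq_getElem_cons hj, List.getD_eq_getElem _ _ hj]
          have : π.length - 1 + 1 = π.length := by omega
          rw [this, List.drop_length]
        rw [hdrop]
        simp [delayPath]
    | cons b rest' =>
      obtain ⟨hedge, hchain'⟩ := List.isChain_cons_cons.mp hchain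
      obtain ⟨j', hj', ha, hb⟩ := hedge
      have hjj : j = j' := by
        rw [hstart] at ha
        have := congrArg Prod.snd ha; simpa using this
      subst hjj
      have hdrop : π.drop j = π.getD j default :: π.drop (j + 1) := by
        rw [List.drop_eq_getElem_cons hj, List.getD_eq_getElem _ _ hj]
      rcases hb with hb | hb
      · -- advance
        have hIH := ih (j + 1) hj' hchain' (by rw [List.head?_cons, hb])
          (by rwa [List.getLast?_cons_cons] at hend)
        obtain ⟨ks, hlen, hsum, hdp⟩ := hIH
        have hab : a ≠ b := by
          intro h
          rw [hstart, hb] at h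
          have := congrArg Prod.snd h; simp at this
        refine ⟨0 :: ks, ?_, ?_, ?_⟩
        · rw [hdrop]; simpa using hlen
        · simpa [List.zip_cons_cons, List.filter_cons, hab] using hsum
        · rw [hdrop]
          simp only [List.map_cons, delayPath, List.zipWith_cons_cons,
            List.flatten_cons, List.replicate_succ, List.replicate_zero]
          rw [hstart]
          simpa [delayPath, List.replicate_succ] using hdp
      · -- self loop
        have hIH := ih j hj hchain' (by rw [List.head?_cons, hb, hstart])
          (by rwa [List.getLast?_cons_cons] at hend)
        obtain ⟨ks, hlen, hsum, hdp⟩ := hIH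
        have hab : a = b := hb.symm
        have hks : ∃ k ks', ks = k :: ks' := by
          cases ks with
          | nil => rw [hdrop] at hlen; simp at hlen
          | cons k ks' => exact ⟨k, ks', rfl⟩
        obtain ⟨k, ks', rfl⟩ := hks
        refine ⟨(k + 1) :: ks', ?_, ?_, ?_⟩
        · rw [hdrop] at hlen ⊢; simpa using hlen
        · simp only [List.tail_cons] at hsum ⊢
          subst hab
          simp only [List.zip_cons_cons, List.filter_cons, decide_eq_true_eq,
            if_true, List.length_cons, List.sum_cons] at hsum ⊢
          omega
        · rw [hdrop] at hdp ⊢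
          simp only [delayPath, List.zipWith_cons_cons, List.flatten_cons] at hdp ⊢
          rw [List.map_cons, hstart, hdp]
          simp [List.replicate_succ]

theorem cg_path_is_delay [Inhabited V] [DecidableEq V] (π : List V) (hπ : π ≠ [])
    (ρ : List (V × ℕ)) (hchain : ρ.Chain' (CGEdge π))
    (hstart : ρ.head? = some (π.getD 0 default, 0))
    (hend : ρ.getLast? = some (π.getD (π.length - 1) default, π.length - 1)) :
    IsDelay (((ρ.zip ρ.tail).filter fun p => decide (p.1 = p.2)).length)
      π (ρ.map Prod.fst) := by
  have h0 : 0 < π.length := List.length_pos_iff.mpr hπ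
  have := cg_aux π ρ 0 h0 hchain hstart hend
  simpa using this
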